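/- For a 2-level Hamiltonian 2H(q) = g(q)·σ with g : [0,1] → R^3 smooth and |g(q)| ≥ g_0 > 0, the mass M(q) = ∑_{a≠0} γ tr(P_a (P_0')^2)/((e_0 - e_a)^2 + γ^2) equals (γ/4) |ĝ'(q)|^2 / (g(q)^2 + γ^2), where ĝ = g/|g|, g(q) = |g(q)|, and the eigenvalues are ±g(q)/2. -/

import Mathlib

open Matrix

attribute [local instance] Matrix.normedAddCommGroup Matrix.normedSpace

/-- `v ⬝ σ` for the vector of Pauli matrices `σ = (σ_x, σ_y, σ_z)`. -/
noncomputable def pauliDot (v : Fin 3 → ℝ) : Matrix (Fin 2) (Fin 2) ℂ :=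
  !![(v 2 : ℂ), (v 0 : ℂ) - (v 1 : ℂ) * Complex.I;
     (v 0 : ℂ) + (v 1 : ℂ) * Complex.I, -(v 2 : ℂ)]

/-- The map `t ↦ pauliDot (n t)` differentiates entrywise. -/
theorem hasDerivAt_pauliDot (n n' : ℝ → Fin 3 → ℝ) (q : ℝ)
    (hn' : ∀ i, HasDerivAt (fun t => n t i) (n' q i) q) :
    HasDerivAt (fun t => pauliDot (n t)) (pauliDot (n' q)) q := by
  have h0 := (hn' 0).ofReal_comp
  have h1 := (hn' 1).ofReal_comp
  have h2 := (hn' 2).ofReal_comp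
  unfold pauliDot
  rw [show (fun t => (!![(n t 2 : ℂ), (n t 0 : ℂ) - (n t 1 : ℂ) * Complex.I;
     (n t 0 : ℂ) + (n t 1 : ℂ) * Complex.I, -(n t 2 : ℂ)])) =
     (fun t => Matrix.of ![![(n t 2 : ℂ), (n t 0 : ℂ) - (n t 1 : ℂ) * Complex.I],
       ![(n t 0 : ℂ) + (n t 1 : ℂ) * Complex.I, -(n t 2 : ℂ)]]) from rfl]
  apply hasDerivAt_pi.2
  intro i
  apply hasDerivAt_pi.2
  intro j
  fin_cases i <;> fin_cases j <;>
    simp [Matrix.of_apply, Matrix.cons_val_zero, Matrix.cons_val_one]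
  · exact h2
  · exact h0.sub (h1.mul_const _)
  · exact h0.add (h1.mul_const _)
  · exact h2.neg

theorem trace_pauli_formula (a b : Fin 3 → ℝ) :
    (Matrix.trace (((2:ℂ)⁻¹ • (1 + pauliDot a)) * ((2:ℂ)⁻¹ • (-pauliDot b)) *
      ((2:ℂ)⁻¹ • (-pauliDot b)))).re = (∑ i, b i ^ 2) / 4 := by
  simp [pauliDot, Matrix.trace, Matrix.mul_apply, Fin.sum_univ_succ, Matrix.one_apply,
    Complex.ext_iff]
  ring

/-- For a 2-level Hamiltonian `2H(q) = g(q)·σ` with `|g(q)| ≥ g₀ > 0`, eigenvalues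
`±g(q)/2` and spectral projections `P_± = (I ± ĝ·σ)/2`, the mass
`M(q) = ∑_{a≠0} γ tr(P_a (P_0')²)/((e_0-e_a)² + γ²)` (here the single term `a = +`, with
`(e_0 - e_a)² = g(q)²`) equals `(γ/4) |ĝ'(q)|² / (g(q)² + γ²)`. -/
theorem mass_two_level
    (g : ℝ → Fin 3 → ℝ) (g0 : ℝ) (hg0 : 0 < g0)
    (gnorm : ℝ → ℝ) (hgnorm : ∀ q, gnorm q = Real.sqrt (∑ i, g q i ^ 2))
    (hgap : ∀ q, g0 ≤ gnorm q)
    (n : ℝ → Fin 3 → ℝ) (hn : ∀ q, n q = (gnorm q)⁻¹ • g q)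
    (n' : ℝ → Fin 3 → ℝ) (hn' : ∀ q i, HasDerivAt (fun t => n t i) (n' q i) q)
    (Pminus Pplus : ℝ → Matrix (Fin 2) (Fin 2) ℂ)
    (hPm : ∀ q, Pminus q = (2 : ℂ)⁻¹ • (1 - pauliDot (n q)))
    (hPp : ∀ q, Pplus q = (2 : ℂ)⁻¹ • (1 + pauliDot (n q)))
    (Pm' : ℝ → Matrix (Fin 2) (Fin 2) ℂ)
    (hPm' : ∀ q, HasDerivAt Pminus (Pm' q) q)
    (γ : ℝ) (hγ : 0 < γ)
    (Mass : ℝ → ℝ)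
    (hMass : ∀ q, Mass q =
      γ * (Matrix.trace (Pplus q * Pm' q * Pm' q)).re / ((-(gnorm q / 2) - gnorm q / 2) ^ 2 + γ ^ 2)) :
    ∀ q, Mass q = γ / 4 * (∑ i, n' q i ^ 2) / (gnorm q ^ 2 + γ ^ 2) := by
  intro q
  -- identify the derivative of Pminus
  have hD : HasDerivAt Pminus ((2 : ℂ)⁻¹ • (-pauliDot (n' q))) q := by
    have hfun : Pminus = fun t => (2 : ℂ)⁻¹ • (1 - pauliDot (n t)) := funext hPm
    rw [hfun]
    have h := hasDerivAt_pauliDot n n' q (hn' q)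
    have := ((hasDerivAt_const q (1 : Matrix (Fin 2) (Fin 2) ℂ)).sub h).const_smul ((2:ℂ)⁻¹)
    rw [zero_sub] at this
    exact this
  have hPm'eq : Pm' q = (2 : ℂ)⁻¹ • (-pauliDot (n' q)) := (hPm' q).unique hD
  -- compute the trace
  have htr : (Matrix.trace (Pplus q * Pm' q * Pm' q)).re = (∑ i, n' q i ^ 2) / 4 := by
    rw [hPp q, hPm'eq]
    exact trace_pauli_formula (n q) (n' q)
  rw [hMass q, htr]
  have : (-(gnorm q / 2) - gnorm q / 2) ^ 2 = gnorm q ^ 2 := by ring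
  rw [this]
  ring
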